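/- Let S be a congruence-simple semiring with a multiplicatively absorbing element w such that x² ≠ w for every x ∈ T = S∖{w}. Then exactly one of the following five cases holds: (1) S is isomorphic to the two-element semiring 𝕋₄ or to 𝕋₈; (2) S is a finite field; (3) S is an infinite simple ring without zero-divisors; (4) w is bi-absorbing (w = o_S), S is additively idempotent (x + x = x for all x) and T·T ⊆ T; (5) w is bi-absorbing (w = o_S), S is infinite, S + S = S, x + x = o_S for every x ∈ S, T·T ⊆ T, and for every y ∈ T the powers y, y², y³, … are pairwise distinct. -/
import Mathlib


universe u

/-- A semiring in the sense of the paper: a (nonempty) set with an associative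
commutative addition and an associative multiplication distributing over
addition from both sides.  No additive or multiplicative identity is assumed. -/
class PaperSemiring (S : Type*) extends Add S, Mul S where
  add_assoc : ∀ a b c : S, a + b + c = a + (b + c)
  add_comm : ∀ a b : S, a + b = b + a
  mul_assoc : ∀ a b c : S, a * b * c = a * (b * c)
  left_distrib : ∀ a b c : S, a * (b + c) = a * b + a * c
  right_distrib : ∀ a b c : S, (a + b) * c = a * c + b * c

/-- `nfoldAdd n x` is the `n`-fold sum `x + ⋯ + x` (only meaningful for `n ≥ 1`;
we set `nfoldAdd 0 x = x` as a junk value). -/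
def nfoldAdd {S : Type*} [Add S] : ℕ → S → S
  | 0, x => x
  | 1, x => x
  | n + 2, x => nfoldAdd (n + 1) x + x

/-- `nfoldMul n x` is the `n`-fold product `x * ⋯ * x` (only meaningful for `n ≥ 1`;
we set `nfoldMul 0 x = x` as a junk value). -/
def nfoldMul {S : Type*} [Mul S] : ℕ → S → S
  | 0, x => x
  | 1, x => x
  | n + 2, x => nfoldMul (n + 1) x * x

/-- `w` is multiplicatively absorbing. -/
def MulAbsorbing {S : Type*} [Mul S] (w : S) : Prop :=
  ∀ x : S, x * w = w ∧ w * x = w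

/-- `w` is a zero element: multiplicatively absorbing and additively neutral. -/
def IsZeroElem {S : Type*} [Add S] [Mul S] (w : S) : Prop :=
  MulAbsorbing w ∧ ∀ x : S, x + w = x

/-- `w` is bi-absorbing: multiplicatively and additively absorbing. -/
def BiAbsorbing {S : Type*} [Add S] [Mul S] (w : S) : Prop :=
  MulAbsorbing w ∧ ∀ x : S, x + w = w

/-- `I` is an ideal: nonempty, `I+I ⊆ I`, `S·I ⊆ I`, `I·S ⊆ I`. -/
def IsIdealSet {S : Type*} [Add S] [Mul S] (I : Set S) : Prop :=
  I.Nonempty ∧ (∀ a ∈ I, ∀ b ∈ I, a + b ∈ I) ∧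
    ∀ s : S, ∀ a ∈ I, s * a ∈ I ∧ a * s ∈ I

/-- `I` is a bi-ideal: nonempty, `S+I ⊆ I`, `S·I ⊆ I`, `I·S ⊆ I`. -/
def IsBiIdealSet {S : Type*} [Add S] [Mul S] (I : Set S) : Prop :=
  I.Nonempty ∧ (∀ s : S, ∀ a ∈ I, s + a ∈ I) ∧
    ∀ s : S, ∀ a ∈ I, s * a ∈ I ∧ a * s ∈ I

/-- The relation `α_I`:  `(x,y) ∈ α_I` iff `x + a = y + b` for some `a, b ∈ I`. -/
def alphaRel {S : Type*} [Add S] (I : Set S) (x y : S) : Prop :=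
  ∃ a ∈ I, ∃ b ∈ I, x + a = y + b

/-- The relation `β_J = (J×J) ∪ id`. -/
def betaRel {S : Type*} (J : Set S) (x y : S) : Prop :=
  (x ∈ J ∧ y ∈ J) ∨ x = y

/-- The relation `γ_n`: `(x,y) ∈ γ_n` iff `n·x = n·y`. -/
def gammaRel {S : Type*} [Add S] (n : ℕ) (x y : S) : Prop :=
  nfoldAdd n x = nfoldAdd n y

/-- The relation `δ`: `(x,y) ∈ δ` iff `2^i·x = y + u` and `2^i·y = x + v` for
some `i ≥ 0` and `u, v ∈ S`. -/
def deltaRel {S : Type*} [Add S] (x y : S) : Prop :=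
  ∃ (i : ℕ) (u v : S), nfoldAdd (2 ^ i) x = y + u ∧ nfoldAdd (2 ^ i) y = x + v

/-- A congruence: an equivalence relation compatible with both operations. -/
def IsCongruence {S : Type*} [Add S] [Mul S] (r : S → S → Prop) : Prop :=
  Equivalence r ∧ (∀ x x' y y' : S, r x x' → r y y' → r (x + y) (x' + y')) ∧
    ∀ x x' y y' : S, r x x' → r y y' → r (x * y) (x' * y')

/-- `S` is congruence-simple: it has just two congruences (the identity relation
and the full relation, which are distinct). -/
def CongSimple (S : Type*) [Add S] [Mul S] : Prop :=
  (∃ x y : S, x ≠ y) ∧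
    ∀ r : S → S → Prop, IsCongruence r → (∀ x y, r x y ↔ x = y) ∨ ∀ x y, r x y

/-- The two-element semiring `𝕋₄`. -/
inductive T4 : Type where | a | b

instance : Add T4 := ⟨fun x y => match x, y with | .a, .a => .a | _, _ => .b⟩
instance : Mul T4 := ⟨fun x y => match x, y with | .b, .b => .b | _, _ => .a⟩

/-- The two-element semiring `𝕋₈`. -/
inductive T8 : Type where | a | b

instance : Add T8 := ⟨fun _ _ => .a⟩
instance : Mul T8 := ⟨fun x y => match x, y with | .b, .b => .b | _, _ => .a⟩

/-- Isomorphism of semirings (as sets with two binary operations). -/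
def SIso (S T : Type*) [Add S] [Mul S] [Add T] [Mul T] : Prop :=
  ∃ f : S ≃ T, (∀ x y : S, f (x + y) = f x + f y) ∧ ∀ x y : S, f (x * y) = f x * f y

/-- Addition of the semiring `V(G)` on `Option G` (`none` plays the role of `o`):
`x + x = x` and `x + y = o` for `x ≠ y`. -/
noncomputable def vAdd {G : Type*} (x y : Option G) : Option G :=
  haveI := Classical.decEq (Option G)
  if x = y then x else none

/-- Multiplication of the semiring `V(G)` on `Option G`: it extends the one of `G`,
and `o` is multiplicatively absorbing. -/
def vMul {G : Type*} [Mul G] : Option G → Option G → Option G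
  | some x, some y => some (x * y)
  | _, _ => none

/-- Case (1): `S` is isomorphic to `𝕋₄` or to `𝕋₈`. -/
def CaseTwoElem (S : Type*) [Add S] [Mul S] : Prop :=
  SIso S T4 ∨ SIso S T8

/-- `S` (with its semiring operations) is a field: there are a neutral element
`z` for addition and a neutral element `e ≠ z` for multiplication, additive
inverses exist, multiplication is commutative and every element `≠ z` has a
multiplicative inverse. -/
def FieldOps (S : Type*) [Add S] [Mul S] : Prop :=
  ∃ z e : S, z ≠ e ∧ (∀ x : S, x + z = x) ∧ (∀ x : S, ∃ y : S, x + y = z) ∧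
    (∀ x : S, x * e = x ∧ e * x = x) ∧ (∀ x y : S, x * y = y * x) ∧
    ∀ x : S, x ≠ z → ∃ y : S, x * y = e

/-- `I` is a (two-sided) ideal of the ring `S` with zero `z`. -/
def RingIdealSet {S : Type*} [Add S] [Mul S] (z : S) (I : Set S) : Prop :=
  z ∈ I ∧ (∀ a ∈ I, ∀ b ∈ I, a + b ∈ I) ∧ (∀ a ∈ I, ∃ b ∈ I, a + b = z) ∧
    ∀ s : S, ∀ a ∈ I, s * a ∈ I ∧ a * s ∈ I

/-- `S` is a simple ring without zero-divisors: `(S,+)` is an abelian group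
with neutral element `z`, the only two-sided ideals are `{z}` and `S`, and
`a·b ≠ z` whenever `a ≠ z` and `b ≠ z`. -/
def SimpleRingNoZeroDiv (S : Type*) [Add S] [Mul S] : Prop :=
  ∃ z : S, (∀ x : S, x + z = x) ∧ (∀ x : S, ∃ y : S, x + y = z) ∧
    (∀ I : Set S, RingIdealSet z I → I = {z} ∨ I = Set.univ) ∧
    ∀ a b : S, a ≠ z → b ≠ z → a * b ≠ z

/-- Case (4): `w = o_S` is bi-absorbing, `S` is additively idempotent and
`T·T ⊆ T` where `T = S∖{w}`. -/
def CaseIdem {S : Type*} [Add S] [Mul S] (w : S) : Prop :=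
  BiAbsorbing w ∧ (∀ x : S, x + x = x) ∧
    ∀ a b : S, a ≠ w → b ≠ w → a * b ≠ w

/-- Case (5): `w = o_S` is bi-absorbing, `S` is infinite, `S + S = S`,
`2x = o_S` for every `x`, `T·T ⊆ T`, and for every `y ∈ T` the powers
`y, y², y³, …` are pairwise distinct. -/
def CaseInfChar2 {S : Type*} [Add S] [Mul S] (w : S) : Prop :=
  BiAbsorbing w ∧ Infinite S ∧ (∀ c : S, ∃ x y : S, x + y = c) ∧
    (∀ x : S, x + x = w) ∧ (∀ a b : S, a ≠ w → b ≠ w → a * b ≠ w) ∧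
    ∀ y : S, y ≠ w → ∀ m n : ℕ, 1 ≤ m → 1 ≤ n → m ≠ n →
      nfoldMul m y ≠ nfoldMul n y

/-! ### Auxiliary material for the proof -/

section AuxInstances

variable {S : Type*} [PaperSemiring S]

instance (priority := 50) PaperSemiring.toAddCommSemigroup : AddCommSemigroup S where
  add_assoc := PaperSemiring.add_assoc
  add_comm := PaperSemiring.add_comm

instance (priority := 50) PaperSemiring.toSemigroup : Semigroup S where
  mul_assoc := PaperSemiring.mul_assoc

instance (priority := 50) PaperSemiring.toDistrib : Distrib S where
  left_distrib := PaperSemiring.left_distrib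
  right_distrib := PaperSemiring.right_distrib

end AuxInstances

section AuxNfold

variable {S : Type*} [PaperSemiring S]

lemma aux_nfoldAdd_one (x : S) : nfoldAdd 1 x = x := rfl

lemma aux_nfoldAdd_two (x : S) : nfoldAdd 2 x = x + x := rfl

lemma aux_nfoldAdd_succ {n : ℕ} (hn : 1 ≤ n) (x : S) :
    nfoldAdd (n + 1) x = nfoldAdd n x + x := by
  cases n with
  | zero => omega
  | succ m => rfl

lemma aux_nfoldAdd_add {m n : ℕ} (hm : 1 ≤ m) (hn : 1 ≤ n) (x : S) :
    nfoldAdd (m + n) x = nfoldAdd m x + nfoldAdd n x := by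
  induction n, hn using Nat.le_induction with
  | base => exact aux_nfoldAdd_succ hm x
  | succ n hn ih =>
    have h1 : m + (n + 1) = (m + n) + 1 := by omega
    rw [h1, aux_nfoldAdd_succ (by omega), ih, aux_nfoldAdd_succ hn, add_assoc]

lemma aux_nfoldAdd_dist {n : ℕ} (hn : 1 ≤ n) (x y : S) :
    nfoldAdd n (x + y) = nfoldAdd n x + nfoldAdd n y := by
  induction n, hn using Nat.le_induction with
  | base => rfl
  | succ n hn ih =>
    rw [aux_nfoldAdd_succ hn, aux_nfoldAdd_succ hn, aux_nfoldAdd_succ hn, ih,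
      add_add_add_comm]

lemma aux_mul_nfoldAdd {n : ℕ} (hn : 1 ≤ n) (a x : S) :
    a * nfoldAdd n x = nfoldAdd n (a * x) := by
  induction n, hn using Nat.le_induction with
  | base => rfl
  | succ n hn ih => rw [aux_nfoldAdd_succ hn, aux_nfoldAdd_succ hn, mul_add, ih]

lemma aux_nfoldAdd_mul {n : ℕ} (hn : 1 ≤ n) (a x : S) :
    nfoldAdd n x * a = nfoldAdd n (x * a) := by
  induction n, hn using Nat.le_induction with
  | base => rfl
  | succ n hn ih => rw [aux_nfoldAdd_succ hn, aux_nfoldAdd_succ hn, add_mul, ih]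

lemma aux_nfoldAdd_comp {m n : ℕ} (hm : 1 ≤ m) (hn : 1 ≤ n) (x : S) :
    nfoldAdd (m * n) x = nfoldAdd m (nfoldAdd n x) := by
  induction m, hm using Nat.le_induction with
  | base => rw [one_mul]; rfl
  | succ m hm ih =>
    have h1 : (m + 1) * n = m * n + n := by ring
    have h2 : 1 ≤ m * n := Nat.one_le_iff_ne_zero.mpr (by positivity)
    rw [h1, aux_nfoldAdd_add h2 hn, ih, aux_nfoldAdd_succ hm]

lemma aux_nfoldAdd_head {n : ℕ} (hn : 1 ≤ n) (x : S) :
    nfoldAdd n x = x ∨ ∃ r, nfoldAdd n x = x + r := by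
  match n, hn with
  | 1, _ => exact Or.inl rfl
  | (m + 2), _ =>
    refine Or.inr ⟨nfoldAdd (m + 1) x, ?_⟩
    show nfoldAdd (m + 1) x + x = x + nfoldAdd (m + 1) x
    exact add_comm _ _

lemma aux_nfoldAdd_peel2 {m n : ℕ} (hm : 1 ≤ m) (hn : 1 ≤ n) (x y c : S) :
    ∃ r, nfoldAdd m x + (nfoldAdd n y + c) = (x + y) + r := by
  rcases aux_nfoldAdd_head hm x with h1 | ⟨r1, h1⟩ <;>
    rcases aux_nfoldAdd_head hn y with h2 | ⟨r2, h2⟩ <;> rw [h1, h2]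
  · exact ⟨c, (add_assoc x y c).symm⟩
  · exact ⟨r2 + c, by simp only [add_assoc]⟩
  · exact ⟨r1 + c, add_add_add_comm x r1 y c⟩
  · exact ⟨r1 + (r2 + c), by
      simp only [add_assoc]
      rw [add_left_comm r1 y (r2 + c)]⟩

lemma aux_nfoldAdd_absorb {w : S} (hww : w + w = w) {n : ℕ} (hn : 1 ≤ n) :
    nfoldAdd n w = w := by
  induction n, hn using Nat.le_induction with
  | base => rfl
  | succ n hn ih => rw [aux_nfoldAdd_succ hn, ih, hww]

lemma aux_nfoldAdd_pow_split (i j : ℕ) (x : S) :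
    nfoldAdd (2 ^ (i + j)) x = nfoldAdd (2 ^ j) (nfoldAdd (2 ^ i) x) := by
  rw [pow_add, Nat.mul_comm]
  exact aux_nfoldAdd_comp Nat.one_le_two_pow Nat.one_le_two_pow x

lemma aux_nfoldAdd_mul_mul {m n : ℕ} (hm : 1 ≤ m) (hn : 1 ≤ n) (x y : S) :
    nfoldAdd (m * n) (x * y) = nfoldAdd m x * nfoldAdd n y := by
  calc nfoldAdd (m * n) (x * y) = nfoldAdd m (nfoldAdd n (x * y)) :=
        aux_nfoldAdd_comp hm hn _
    _ = nfoldAdd m (x * nfoldAdd n y) := by rw [aux_mul_nfoldAdd hn]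
    _ = nfoldAdd m x * nfoldAdd n y := (aux_nfoldAdd_mul hm _ _).symm

lemma aux_nfoldMul_succ {n : ℕ} (hn : 1 ≤ n) (x : S) :
    nfoldMul (n + 1) x = nfoldMul n x * x := by
  cases n with
  | zero => omega
  | succ m => rfl

lemma aux_nfoldMul_add {m n : ℕ} (hm : 1 ≤ m) (hn : 1 ≤ n) (x : S) :
    nfoldMul (m + n) x = nfoldMul m x * nfoldMul n x := by
  induction n, hn using Nat.le_induction with
  | base => exact aux_nfoldMul_succ hm x
  | succ n hn ih =>
    have h1 : m + (n + 1) = (m + n) + 1 := by omega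
    rw [h1, aux_nfoldMul_succ (by omega), ih, aux_nfoldMul_succ hn, mul_assoc]

lemma aux_expand4 (p q r t : S) :
    (p + q) * (r + t) = p * r + (p * t + (q * r + q * t)) := by
  rw [add_mul, mul_add, mul_add, add_assoc]

end AuxNfold

section AuxCong

variable {S : Type*} [PaperSemiring S]

lemma aux_alpha_isCong {I : Set S} (hI : IsIdealSet I) : IsCongruence (alphaRel I) := by
  obtain ⟨⟨i0, hi0⟩, hIadd, hImul⟩ := hI
  refine ⟨⟨fun x => ⟨i0, hi0, i0, hi0, rfl⟩, ?_, ?_⟩, ?_, ?_⟩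
  · rintro x y ⟨a, ha, b, hb, h⟩
    exact ⟨b, hb, a, ha, h.symm⟩
  · rintro x y z ⟨a, ha, b, hb, h1⟩ ⟨c, hc, d, hd, h2⟩
    refine ⟨a + c, hIadd _ ha _ hc, d + b, hIadd _ hd _ hb, ?_⟩
    calc x + (a + c) = (x + a) + c := (add_assoc ..).symm
      _ = (y + b) + c := by rw [h1]
      _ = (y + c) + b := by rw [add_assoc, add_comm b c, ← add_assoc]
      _ = (z + d) + b := by rw [h2]
      _ = z + (d + b) := add_assoc ..
  · rintro x x' y y' ⟨a, ha, b, hb, h1⟩ ⟨c, hc, d, hd, h2⟩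
    refine ⟨a + c, hIadd _ ha _ hc, b + d, hIadd _ hb _ hd, ?_⟩
    calc (x + y) + (a + c) = (x + a) + (y + c) := add_add_add_comm ..
      _ = (x' + b) + (y' + d) := by rw [h1, h2]
      _ = (x' + y') + (b + d) := (add_add_add_comm ..).symm
  · rintro x x' y y' ⟨a, ha, b, hb, h1⟩ ⟨c, hc, d, hd, h2⟩
    refine ⟨x * c + (a * y + a * c),
      hIadd _ (hImul x c hc).1 _ (hIadd _ (hImul y a ha).2 _ (hImul c a ha).2),
      x' * d + (b * y' + b * d),
      hIadd _ (hImul x' d hd).1 _ (hIadd _ (hImul y' b hb).2 _ (hImul d b hb).2), ?_⟩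
    calc x * y + (x * c + (a * y + a * c)) = (x + a) * (y + c) := (aux_expand4 ..).symm
      _ = (x' + b) * (y' + d) := by rw [h1, h2]
      _ = x' * y' + (x' * d + (b * y' + b * d)) := aux_expand4 ..

lemma aux_beta_isCong {J : Set S} (hJ : IsBiIdealSet J) : IsCongruence (betaRel J) := by
  obtain ⟨-, hJadd, hJmul⟩ := hJ
  refine ⟨⟨fun x => Or.inr rfl, ?_, ?_⟩, ?_, ?_⟩
  · rintro x y (⟨h1, h2⟩ | rfl)
    · exact Or.inl ⟨h2, h1⟩
    · exact Or.inr rfl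
  · rintro x y z (⟨h1, h2⟩ | rfl) (⟨h3, h4⟩ | rfl)
    · exact Or.inl ⟨h1, h4⟩
    · exact Or.inl ⟨h1, h2⟩
    · exact Or.inl ⟨h3, h4⟩
    · exact Or.inr rfl
  · rintro x x' y y' (⟨hx, hx'⟩ | rfl) (⟨hy, hy'⟩ | rfl)
    · exact Or.inl ⟨hJadd x y hy, hJadd x' y' hy'⟩
    · exact Or.inl ⟨by rw [add_comm]; exact hJadd y x hx,
        by rw [add_comm]; exact hJadd y x' hx'⟩
    · exact Or.inl ⟨hJadd x y hy, hJadd x y' hy'⟩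
    · exact Or.inr rfl
  · rintro x x' y y' (⟨hx, hx'⟩ | rfl) (⟨hy, hy'⟩ | rfl)
    · exact Or.inl ⟨(hJmul x y hy).1, (hJmul x' y' hy').1⟩
    · exact Or.inl ⟨(hJmul y x hx).2, (hJmul y x' hx').2⟩
    · exact Or.inl ⟨(hJmul x y hy).1, (hJmul x y' hy').1⟩
    · exact Or.inr rfl

lemma aux_gamma2_isCong : IsCongruence (gammaRel (S := S) 2) := by
  refine ⟨⟨fun x => rfl, fun h => h.symm, fun h1 h2 => h1.trans h2⟩, ?_, ?_⟩
  · intro x x' y y' h1 h2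
    have h1' : x + x = x' + x' := h1
    have h2' : y + y = y' + y' := h2
    show (x + y) + (x + y) = (x' + y') + (x' + y')
    calc (x + y) + (x + y) = (x + x) + (y + y) := add_add_add_comm ..
      _ = (x' + x') + (y' + y') := by rw [h1', h2']
      _ = (x' + y') + (x' + y') := (add_add_add_comm ..).symm
  · intro x x' y y' h1 h2
    have h1' : x + x = x' + x' := h1
    have h2' : y + y = y' + y' := h2
    show (x * y) + (x * y) = (x' * y') + (x' * y')
    calc (x * y) + (x * y) = (x + x) * y := (add_mul ..).symm
      _ = (x' + x') * y := by rw [h1']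
      _ = x' * (y + y) := by rw [add_mul, ← mul_add]
      _ = x' * (y' + y') := by rw [h2']
      _ = (x' * y') + (x' * y') := mul_add ..

lemma aux_delta_isCong : IsCongruence (deltaRel (S := S)) := by
  have hp : ∀ i : ℕ, 1 ≤ 2 ^ i := fun i => Nat.one_le_two_pow
  refine ⟨⟨?_, ?_, ?_⟩, ?_, ?_⟩
  · intro x
    exact ⟨1, x, x, by rw [pow_one]; rfl, by rw [pow_one]; rfl⟩
  · rintro x y ⟨i, u, v, h1, h2⟩
    exact ⟨i, v, u, h2, h1⟩
  · rintro x y z ⟨i, u, v, h1, h2⟩ ⟨j, p, q, h3, h4⟩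
    refine ⟨i + j, p + nfoldAdd (2 ^ j) u, v + nfoldAdd (2 ^ i) q, ?_, ?_⟩
    · calc nfoldAdd (2 ^ (i + j)) x = nfoldAdd (2 ^ j) (nfoldAdd (2 ^ i) x) :=
            aux_nfoldAdd_pow_split ..
        _ = nfoldAdd (2 ^ j) (y + u) := by rw [h1]
        _ = nfoldAdd (2 ^ j) y + nfoldAdd (2 ^ j) u := aux_nfoldAdd_dist (hp j) ..
        _ = (z + p) + nfoldAdd (2 ^ j) u := by rw [h3]
        _ = z + (p + nfoldAdd (2 ^ j) u) := add_assoc ..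
    · calc nfoldAdd (2 ^ (i + j)) z = nfoldAdd (2 ^ i) (nfoldAdd (2 ^ j) z) := by
            rw [Nat.add_comm i j]; exact aux_nfoldAdd_pow_split ..
        _ = nfoldAdd (2 ^ i) (y + q) := by rw [h4]
        _ = nfoldAdd (2 ^ i) y + nfoldAdd (2 ^ i) q := aux_nfoldAdd_dist (hp i) ..
        _ = (x + v) + nfoldAdd (2 ^ i) q := by rw [h2]
        _ = x + (v + nfoldAdd (2 ^ i) q) := add_assoc ..
  · rintro x x' y y' ⟨i, u, v, h1, h2⟩ ⟨j, p, q, h3, h4⟩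
    obtain ⟨r, hr⟩ := aux_nfoldAdd_peel2 (hp j) (hp i) x' y'
      (nfoldAdd (2 ^ j) u + nfoldAdd (2 ^ i) p)
    obtain ⟨r', hr'⟩ := aux_nfoldAdd_peel2 (hp j) (hp i) x y
      (nfoldAdd (2 ^ j) v + nfoldAdd (2 ^ i) q)
    refine ⟨i + j, r, r', ?_, ?_⟩
    · calc nfoldAdd (2 ^ (i + j)) (x + y)
          = nfoldAdd (2 ^ (i + j)) x + nfoldAdd (2 ^ (i + j)) y :=
            aux_nfoldAdd_dist (hp _) ..
        _ = nfoldAdd (2 ^ j) (nfoldAdd (2 ^ i) x) +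
              nfoldAdd (2 ^ i) (nfoldAdd (2 ^ j) y) := by
            rw [aux_nfoldAdd_pow_split i j x]
            rw [show nfoldAdd (2 ^ (i + j)) y = nfoldAdd (2 ^ i) (nfoldAdd (2 ^ j) y) by
              rw [Nat.add_comm i j]; exact aux_nfoldAdd_pow_split ..]
        _ = nfoldAdd (2 ^ j) (x' + u) + nfoldAdd (2 ^ i) (y' + p) := by rw [h1, h3]
        _ = (nfoldAdd (2 ^ j) x' + nfoldAdd (2 ^ j) u) +
              (nfoldAdd (2 ^ i) y' + nfoldAdd (2 ^ i) p) := by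
            rw [aux_nfoldAdd_dist (hp j), aux_nfoldAdd_dist (hp i)]
        _ = nfoldAdd (2 ^ j) x' + (nfoldAdd (2 ^ i) y' +
              (nfoldAdd (2 ^ j) u + nfoldAdd (2 ^ i) p)) := by
            rw [add_add_add_comm, add_assoc]
        _ = (x' + y') + r := hr
    · calc nfoldAdd (2 ^ (i + j)) (x' + y')
          = nfoldAdd (2 ^ (i + j)) x' + nfoldAdd (2 ^ (i + j)) y' :=
            aux_nfoldAdd_dist (hp _) ..
        _ = nfoldAdd (2 ^ j) (nfoldAdd (2 ^ i) x') +
              nfoldAdd (2 ^ i) (nfoldAdd (2 ^ j) y') := by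
            rw [aux_nfoldAdd_pow_split i j x']
            rw [show nfoldAdd (2 ^ (i + j)) y' = nfoldAdd (2 ^ i) (nfoldAdd (2 ^ j) y') by
              rw [Nat.add_comm i j]; exact aux_nfoldAdd_pow_split ..]
        _ = nfoldAdd (2 ^ j) (x + v) + nfoldAdd (2 ^ i) (y + q) := by rw [h2, h4]
        _ = (nfoldAdd (2 ^ j) x + nfoldAdd (2 ^ j) v) +
              (nfoldAdd (2 ^ i) y + nfoldAdd (2 ^ i) q) := by
            rw [aux_nfoldAdd_dist (hp j), aux_nfoldAdd_dist (hp i)]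
        _ = nfoldAdd (2 ^ j) x + (nfoldAdd (2 ^ i) y +
              (nfoldAdd (2 ^ j) v + nfoldAdd (2 ^ i) q)) := by
            rw [add_add_add_comm, add_assoc]
        _ = (x + y) + r' := hr'
  · rintro x x' y y' ⟨i, u, v, h1, h2⟩ ⟨j, p, q, h3, h4⟩
    refine ⟨i + j, x' * p + (u * y' + u * p), x * q + (v * y + v * q), ?_, ?_⟩
    · calc nfoldAdd (2 ^ (i + j)) (x * y) = nfoldAdd (2 ^ i * 2 ^ j) (x * y) := by
            rw [pow_add]
        _ = nfoldAdd (2 ^ i) x * nfoldAdd (2 ^ j) y :=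
            aux_nfoldAdd_mul_mul (hp i) (hp j) ..
        _ = (x' + u) * (y' + p) := by rw [h1, h3]
        _ = x' * y' + (x' * p + (u * y' + u * p)) := aux_expand4 ..
    · calc nfoldAdd (2 ^ (i + j)) (x' * y') = nfoldAdd (2 ^ i * 2 ^ j) (x' * y') := by
            rw [pow_add]
        _ = nfoldAdd (2 ^ i) x' * nfoldAdd (2 ^ j) y' :=
            aux_nfoldAdd_mul_mul (hp i) (hp j) ..
        _ = (x + v) * (y + q) := by rw [h2, h4]
        _ = x * y + (x * q + (v * y + v * q)) := aux_expand4 ..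

lemma aux_beta_full_mem {J : Set S} (hpair : ∃ p q : S, p ≠ q)
    (hfull : ∀ x y : S, betaRel J x y) : ∀ x, x ∈ J := by
  intro x
  obtain ⟨p, q, hpq⟩ := hpair
  by_cases hxp : x = p
  · rcases hfull x q with h | h
    · exact h.1
    · exact absurd (hxp.symm.trans h) hpq
  · rcases hfull x p with h | h
    · exact h.1
    · exact absurd h hxp

end AuxCong

/-- The ideal generated by `a` (in a semiring without negatives). -/
inductive genId {S : Type*} [Add S] [Mul S] (a : S) : S → Prop
  | base : genId a a
  | mull (s x : S) : genId a x → genId a (s * x)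
  | mulr (s x : S) : genId a x → genId a (x * s)
  | add (x y : S) : genId a x → genId a y → genId a (x + y)

/-- The ideal generated by `a`, closed also under "additive inverses relative
to `w`". -/
inductive genIdR {S : Type*} [Add S] [Mul S] (w a : S) : S → Prop
  | base : genIdR w a a
  | mull (s x : S) : genIdR w a x → genIdR w a (s * x)
  | mulr (s x : S) : genIdR w a x → genIdR w a (x * s)
  | add (x y : S) : genIdR w a x → genIdR w a y → genIdR w a (x + y)
  | neg (x y : S) : genIdR w a x → x + y = w → genIdR w a y

section AuxMisc

variable {S : Type*} [PaperSemiring S]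

lemma aux_genIdR_ideal (w a : S) : IsIdealSet {x : S | genIdR w a x} :=
  ⟨⟨a, genIdR.base⟩, fun x hx y hy => genIdR.add x y hx hy,
    fun s x hx => ⟨genIdR.mull s x hx, genIdR.mulr s x hx⟩⟩

/-- The key "no zero divisors" lemma for the case where `w` is a zero element. -/
lemma aux_noZD {w : S} (hw : MulAbsorbing w) (hnil : ∀ x : S, x ≠ w → x * x ≠ w)
    (hsimp : ∀ r : S → S → Prop, IsCongruence r →
      (∀ x y, r x y ↔ x = y) ∨ ∀ x y, r x y)
    (hz : ∀ x : S, x + w = x)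
    (hside : (∀ x : S, x + x = x) ∨ (∀ x : S, ∃ v, x + v = w)) :
    ∀ a b : S, a ≠ w → b ≠ w → a * b ≠ w := by
  have hww : w + w = w := hz w
  intro a b hA hB hab
  have hsq : ∀ x : S, x * x = w → x = w := by
    intro x h
    by_contra hx
    exact hnil x hx h
  have hba : b * a = w := by
    apply hsq
    rw [mul_assoc, ← mul_assoc a b a, hab, (hw a).2, (hw b).1]
  have hbua : ∀ u : S, b * (u * a) = w := by
    intro u
    apply hsq
    rw [mul_assoc b (u * a) (b * (u * a)), ← mul_assoc (u * a) b (u * a),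
      mul_assoc u a b, hab, (hw u).1, (hw (u * a)).2, (hw b).1]
  -- every element of the ideal generated by `a` is killed by `b` on the left
  have hkill : ∀ x : S, genIdR w a x → b * x = w ∧ ∀ u : S, b * (u * x) = w := by
    intro x hx
    induction hx with
    | base => exact ⟨hba, hbua⟩
    | mull s x hx ih => exact ⟨ih.2 s, fun u => by rw [← mul_assoc u s x]; exact ih.2 (u * s)⟩
    | mulr s x hx ih =>
      refine ⟨by rw [← mul_assoc, ih.1, (hw s).2], fun u => ?_⟩
      rw [← mul_assoc u x s, ← mul_assoc b (u * x) s, ih.2 u, (hw s).2]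
    | add x y hx hy ihx ihy =>
      refine ⟨by rw [mul_add, ihx.1, ihy.1, hww], fun u => ?_⟩
      rw [mul_add, mul_add, ihx.2, ihy.2, hww]
    | neg x y hx hxy ih =>
      constructor
      · have h1 : b * x + b * y = w := by rw [← mul_add, hxy, (hw b).1]
        rw [ih.1] at h1
        rw [← h1, add_comm, hz]
      · intro u
        have h1 : b * (u * x) + b * (u * y) = w := by
          rw [← mul_add, ← mul_add, hxy, (hw u).1, (hw b).1]
        rw [ih.2 u] at h1
        rw [← h1, add_comm, hz]
  rcases hsimp _ (aux_alpha_isCong (aux_genIdR_ideal w a)) with hid | hfull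
  · -- identity congruence forces a = w, contradiction
    rcases hside with hidem | hinv
    · refine hA ((hid a w).mp ⟨a, genIdR.base, a, genIdR.base, ?_⟩)
      rw [hidem a, add_comm, hz]
    · obtain ⟨va, hva⟩ := hinv a
      have hvaI : genIdR w a va := genIdR.neg a va genIdR.base hva
      have hwI : genIdR w a w := by
        have h2 := genIdR.add a va genIdR.base hvaI
        rwa [hva] at h2
      refine hA ((hid a w).mp ⟨va, hvaI, w, hwI, ?_⟩)
      rw [hva, hww]
  · -- full congruence: every x satisfies b * x = w, contradiction with b² ≠ w
    have hbx : ∀ x : S, b * x = w := by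
      intro x
      obtain ⟨u, hu, v, hv, hxy⟩ := hfull x w
      calc b * x = b * x + w := (hz _).symm
        _ = b * x + b * u := by rw [(hkill u hu).1]
        _ = b * (x + u) := (mul_add ..).symm
        _ = b * (w + v) := by rw [hxy]
        _ = b * w + b * v := mul_add ..
        _ = w := by rw [(hw b).1, (hkill v hv).1, hww]
    exact hnil b hB (hbx b)

end AuxMisc

section AuxTwoElem

instance : Finite T4 :=
  Finite.of_surjective (fun b : Bool => if b then T4.b else T4.a)
    (fun x => by cases x; exacts [⟨false, rfl⟩, ⟨true, rfl⟩])

instance : Finite T8 :=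
  Finite.of_surjective (fun b : Bool => if b then T8.b else T8.a)
    (fun x => by cases x; exacts [⟨false, rfl⟩, ⟨true, rfl⟩])

variable {S : Type*} [Add S] [Mul S]

lemma aux_siso_T4_finite (h : SIso S T4) : Finite S := by
  obtain ⟨f, -, -⟩ := h
  exact Finite.of_equiv T4 f.symm

lemma aux_siso_T8_finite (h : SIso S T8) : Finite S := by
  obtain ⟨f, -, -⟩ := h
  exact Finite.of_equiv T8 f.symm

lemma aux_siso_T4_idem (h : SIso S T4) : ∀ x : S, x + x = x := by
  obtain ⟨f, hadd, -⟩ := h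
  intro x
  have ht : f x + f x = f x := by cases hfx : f x <;> rfl
  exact f.injective ((hadd x x).trans ht)

lemma aux_siso_T8_const (h : SIso S T8) : ∃ c : S, ∀ x y : S, x + y = c := by
  obtain ⟨f, hadd, -⟩ := h
  refine ⟨f.symm T8.a, fun x y => f.injective ?_⟩
  rw [hadd, f.apply_symm_apply]
  rfl

lemma aux_siso_T4_no_biabs {w : S} (hw : MulAbsorbing w)
    (hb : ∀ x : S, x + w = w) (h : SIso S T4) : False := by
  obtain ⟨f, hadd, hmul⟩ := h
  have habs : ∀ t : T4, t + f w = f w ∧ t * f w = f w := by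
    intro t
    obtain ⟨x, rfl⟩ := f.surjective t
    exact ⟨by rw [← hadd, hb], by rw [← hmul, (hw x).1]⟩
  cases hfw : f w with
  | a =>
    have h1 := (habs T4.b).1
    rw [hfw] at h1
    exact T4.noConfusion (h1 : T4.b = T4.a)
  | b =>
    have h1 := (habs T4.a).2
    rw [hfw] at h1
    exact T4.noConfusion (h1 : T4.a = T4.b)

lemma aux_siso_T8_no_idem (hidem : ∀ x : S, x + x = x) (h : SIso S T8) : False := by
  obtain ⟨f, hadd, -⟩ := h
  have h1 := hadd (f.symm T8.b) (f.symm T8.b)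
  rw [hidem, f.apply_symm_apply] at h1
  exact T8.noConfusion (h1 : T8.b = T8.a)

end AuxTwoElem

section AuxFieldExcl

variable {S : Type*} [PaperSemiring S]

lemma aux_idem_not_fieldOps (hidem : ∀ x : S, x + x = x) : ¬ FieldOps S := by
  rintro ⟨z, e, hne, hz', hinv', -, -, -⟩
  obtain ⟨v, hv⟩ := hinv' e
  refine hne ?_
  calc z = e + v := hv.symm
    _ = (e + e) + v := by rw [hidem]
    _ = e + (e + v) := add_assoc ..
    _ = e + z := by rw [hv]
    _ = e := hz' e

lemma aux_const_not_fieldOps {c : S} (hc : ∀ x y : S, x + y = c) : ¬ FieldOps S := by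
  rintro ⟨z, e, hne, hz', -, -, -, -⟩
  have h1 : ∀ x : S, x = c := fun x => (hz' x).symm.trans (hc x z)
  exact hne ((h1 z).trans (h1 e).symm)

lemma aux_grouplike_all_eq {w : S} (ha : ∀ x : S, x + w = w) (z : S)
    (hz : ∀ x : S, x + z = x) (hinv : ∀ x : S, ∃ v, x + v = z) : ∀ x : S, x = z := by
  intro x
  obtain ⟨v, hv⟩ := hinv w
  have h1 : x + z = z := by
    rw [← hv, ← add_assoc, ha x]
  rw [← hz x, h1]

end AuxFieldExcl

section AuxMore

variable {S : Type*} [PaperSemiring S]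

lemma aux_delta_double (x : S) : deltaRel x (x + x) := by
  have h4 : (2 : ℕ) ^ 2 = 4 := by norm_num
  refine ⟨2, x + x, x + (x + (x + (x + (x + (x + x))))), ?_, ?_⟩
  · rw [h4]
    show ((x + x) + x) + x = (x + x) + (x + x)
    rw [add_assoc]
  · rw [h4]
    show (((x + x) + (x + x)) + (x + x)) + (x + x) =
      x + (x + (x + (x + (x + (x + (x + x))))))
    simp only [add_assoc]

/-- Classification in the two-element endgames. -/
lemma aux_classify {w t0 : S} (hw : MulAbsorbing w) (ht0 : t0 ≠ w)
    (hTT : ∀ a b : S, a ≠ w → b ≠ w → a * b ≠ w)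
    (haddc : ∀ x x' y y' : S, betaRel {x : S | x ≠ w} x x' →
      betaRel {x : S | x ≠ w} y y' → betaRel {x : S | x ≠ w} (x + y) (x' + y'))
    (hsimp : ∀ r : S → S → Prop, IsCongruence r →
      (∀ x y, r x y ↔ x = y) ∨ ∀ x y, r x y) :
    ∀ x : S, x = w ∨ x = t0 := by
  have hcongT : IsCongruence (betaRel {x : S | x ≠ w}) := by
    refine ⟨⟨fun x => Or.inr rfl, ?_, ?_⟩, ?_, ?_⟩
    · rintro x y (⟨h1, h2⟩ | rfl)
      exacts [Or.inl ⟨h2, h1⟩, Or.inr rfl]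
    · rintro x y z (⟨h1, h2⟩ | rfl) (⟨h3, h4⟩ | rfl)
      exacts [Or.inl ⟨h1, h4⟩, Or.inl ⟨h1, h2⟩, Or.inl ⟨h3, h4⟩, Or.inr rfl]
    · exact haddc
    · rintro x x' y y' (⟨hx, hx'⟩ | rfl) (⟨hy, hy'⟩ | rfl)
      · exact Or.inl ⟨hTT x y hx hy, hTT x' y' hx' hy'⟩
      · by_cases hyw : y = w
        · subst hyw
          exact Or.inr (by rw [(hw x).1, (hw x').1])
        · exact Or.inl ⟨hTT x y hx hyw, hTT x' y hx' hyw⟩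
      · by_cases hxw : x = w
        · subst hxw
          exact Or.inr (by rw [(hw y).2, (hw y').2])
        · exact Or.inl ⟨hTT x y hxw hy, hTT x y' hxw hy'⟩
      · exact Or.inr rfl
  rcases hsimp _ hcongT with hidT | hfullT
  · intro x
    by_cases hx : x = w
    · exact Or.inl hx
    · exact Or.inr ((hidT x t0).mp (Or.inl ⟨hx, ht0⟩))
  · exfalso
    rcases hfullT w t0 with h | h
    · exact h.1 rfl
    · exact ht0 h.symm

end AuxMore

/-- Let `S` be a congruence-simple semiring with a
multiplicatively absorbing element `w` such that `x² ≠ w` for every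
`x ∈ T = S∖{w}`.  Then exactly one of the following five cases holds:
(1) `S ≅ 𝕋₄` or `S ≅ 𝕋₈`; (2) `S` is a finite field; (3) `S` is an infinite
simple ring without zero-divisors; (4) `w = o_S`, `S` is additively idempotent
and `T·T ⊆ T`; (5) `w = o_S`, `S` is infinite, `S + S = S`, `2x = o_S` for all
`x`, `T·T ⊆ T` and all powers of any `y ∈ T` are pairwise distinct. -/
theorem stmt_18 {S : Type*} [PaperSemiring S] (hs : CongSimple S) (w : S)
    (hw : MulAbsorbing w) (hnil : ∀ x : S, x ≠ w → x * x ≠ w) :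
    (CaseTwoElem S ∧ ¬(Finite S ∧ FieldOps S) ∧
        ¬(Infinite S ∧ SimpleRingNoZeroDiv S) ∧ ¬CaseIdem w ∧ ¬CaseInfChar2 w) ∨
      (¬CaseTwoElem S ∧ (Finite S ∧ FieldOps S) ∧
        ¬(Infinite S ∧ SimpleRingNoZeroDiv S) ∧ ¬CaseIdem w ∧ ¬CaseInfChar2 w) ∨
      (¬CaseTwoElem S ∧ ¬(Finite S ∧ FieldOps S) ∧
        (Infinite S ∧ SimpleRingNoZeroDiv S) ∧ ¬CaseIdem w ∧ ¬CaseInfChar2 w) ∨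
      (¬CaseTwoElem S ∧ ¬(Finite S ∧ FieldOps S) ∧
        ¬(Infinite S ∧ SimpleRingNoZeroDiv S) ∧ CaseIdem w ∧ ¬CaseInfChar2 w) ∨
      (¬CaseTwoElem S ∧ ¬(Finite S ∧ FieldOps S) ∧
        ¬(Infinite S ∧ SimpleRingNoZeroDiv S) ∧ ¬CaseIdem w ∧ CaseInfChar2 w) := by
  classical
  obtain ⟨⟨p0, q0, hpq⟩, hsimp⟩ := hs
  have hpair : ∃ p q : S, p ≠ q := ⟨p0, q0, hpq⟩
  obtain ⟨t0, ht0⟩ : ∃ t : S, t ≠ w := by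
    by_cases h : p0 = w
    · exact ⟨q0, fun hq => hpq (by rw [h, hq])⟩
    · exact ⟨p0, h⟩
  have hww : w + w = w := by
    have h1 : w * (w + w) = w + w := by rw [mul_add, (hw w).1]
    have h2 : w * (w + w) = w := (hw (w + w)).2
    rw [← h1, h2]
  have hsq : ∀ x : S, x * x = w → x = w := by
    intro x h
    by_contra hx
    exact hnil x hx h
  -- First dichotomy: the congruence x ~ y  iff  x + w = y + w
  have hr1 : IsCongruence (fun x y : S => x + w = y + w) := by
    refine ⟨⟨fun x => rfl, fun h => h.symm, fun h1 h2 => h1.trans h2⟩, ?_, ?_⟩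
    · intro x x' y y' h1 h2
      show (x + y) + w = (x' + y') + w
      have key : ∀ p q : S, (p + w) + (q + w) = (p + q) + w := by
        intro p q
        rw [add_add_add_comm, hww]
      calc (x + y) + w = (x + w) + (y + w) := (key x y).symm
        _ = (x' + w) + (y' + w) := by rw [h1, h2]
        _ = (x' + y') + w := key x' y'
    · intro x x' y y' h1 h2
      show (x * y) + w = (x' * y') + w
      have key : ∀ p q : S, (p + w) * (q + w) = p * q + w := by
        intro p q
        rw [aux_expand4, (hw p).1, (hw q).2, (hw w).1, hww, hww]
      calc (x * y) + w = (x + w) * (y + w) := (key x y).symm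
        _ = (x' + w) * (y' + w) := by rw [h1, h2]
        _ = (x' * y') + w := key x' y'
  rcases hsimp _ hr1 with hid1 | hfull1
  · -- CASE B : w is a zero element
    have hz : ∀ x : S, x + w = x := by
      intro x
      exact (hid1 (x + w) x).mp (show (x + w) + w = x + w by rw [add_assoc, hww])
    have hbiabs_kill : ∀ u : S, (∀ x : S, x + w = w) → False := by
      intro u hb
      exact ht0 ((hz t0).symm.trans (hb t0))
    rcases hsimp _ (aux_delta_isCong (S := S)) with hdid | hdfull
    · -- CASE B2 : additively idempotent, S ≅ T4
      have hidem : ∀ x : S, x + x = x := by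
        intro x
        exact ((hdid x (x + x)).mp (aux_delta_double x)).symm
      have hTT : ∀ a b : S, a ≠ w → b ≠ w → a * b ≠ w :=
        aux_noZD hw hnil hsimp hz (Or.inl hidem)
      have haddT : ∀ x s : S, x ≠ w → x + s ≠ w := by
        intro x s hx h
        refine hx ?_
        calc x = x + w := (hz x).symm
          _ = x + (x + s) := by rw [h]
          _ = (x + x) + s := (add_assoc ..).symm
          _ = x + s := by rw [hidem]
          _ = w := h
      have hclass : ∀ x : S, x = w ∨ x = t0 := by
        refine aux_classify hw ht0 hTT ?_ hsimp
        rintro x x' y y' (⟨hx, hx'⟩ | rfl) (⟨hy, hy'⟩ | rfl)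
        · exact Or.inl ⟨haddT x y hx, haddT x' y' hx'⟩
        · exact Or.inl ⟨haddT x y hx, haddT x' y hx'⟩
        · exact Or.inl ⟨by rw [add_comm]; exact haddT y x hy,
            by rw [add_comm]; exact haddT y' x hy'⟩
        · exact Or.inr rfl
      have ht0t0 : t0 * t0 = t0 := by
        rcases hclass (t0 * t0) with h | h
        · exact absurd h (hTT t0 t0 ht0 ht0)
        · exact h
      have hfw4 : (if w = w then T4.a else T4.b) = T4.a := if_pos rfl
      have hft4 : (if t0 = w then T4.a else T4.b) = T4.b := if_neg ht0
      have hwt0 : w + t0 = t0 := by rw [add_comm]; exact hz t0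
      have hiso : SIso S T4 := by
        refine ⟨⟨fun x => if x = w then T4.a else T4.b,
          fun t => match t with | T4.a => w | T4.b => t0, ?_, ?_⟩, ?_, ?_⟩
        · intro x
          by_cases hx : x = w
          · simp only [if_pos hx]
            exact hx.symm
          · simp only [if_neg hx]
            rcases hclass x with h | h
            · exact absurd h hx
            · exact h.symm
        · intro t
          cases t
          · show (if w = w then T4.a else T4.b) = T4.a
            exact hfw4
          · show (if t0 = w then T4.a else T4.b) = T4.b
            exact hft4
        · intro x y
          show (if x + y = w then T4.a else T4.b) =
            (if x = w then T4.a else T4.b) + (if y = w then T4.a else T4.b)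
          rcases hclass x with h | h <;> rcases hclass y with h' | h' <;> rw [h, h']
          · rw [hww, hfw4]; rfl
          · rw [hwt0, hft4, hfw4]; rfl
          · rw [hz t0, hft4, hfw4]; rfl
          · rw [hidem t0, hft4]; rfl
        · intro x y
          show (if x * y = w then T4.a else T4.b) =
            (if x = w then T4.a else T4.b) * (if y = w then T4.a else T4.b)
          rcases hclass x with h | h <;> rcases hclass y with h' | h' <;> rw [h, h']
          · rw [(hw w).1, hfw4]; rfl
          · rw [(hw t0).2, hfw4, hft4]; rfl
          · rw [(hw t0).1, hfw4, hft4]; rfl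
          · rw [ht0t0, hft4]; rfl
      have hfinS : Finite S := by
        refine Finite.of_surjective (fun b : Bool => if b then t0 else w) ?_
        intro x
        rcases hclass x with h | h
        exacts [⟨false, h.symm⟩, ⟨true, h.symm⟩]
      refine Or.inl ⟨Or.inl hiso, ?_, ?_, ?_, ?_⟩
      · rintro ⟨-, hf⟩
        exact aux_idem_not_fieldOps hidem hf
      · rintro ⟨hinf, -⟩
        exact @not_finite S hinf hfinS
      · rintro ⟨⟨-, hb⟩, -, -⟩
        exact hbiabs_kill w hb
      · rintro ⟨⟨-, hb⟩, -⟩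
        exact hbiabs_kill w hb
    · -- CASE B1 : ring case
      have hinv : ∀ x : S, ∃ v, x + v = w := by
        intro x
        obtain ⟨i, u, v, h1, h2⟩ := hdfull x w
        rw [aux_nfoldAdd_absorb hww Nat.one_le_two_pow] at h2
        exact ⟨v, h2.symm⟩
      have hTT : ∀ a b : S, a ≠ w → b ≠ w → a * b ≠ w :=
        aux_noZD hw hnil hsimp hz (Or.inr hinv)
      rcases finite_or_infinite S with hfinS | hinfS
      · -- CASE 2 : finite field
        haveI := hfinS
        have hneg : ∀ x : S, x + Classical.choose (hinv x) = w :=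
          fun x => Classical.choose_spec (hinv x)
        have hacan : ∀ x y z : S, x + z = y + z → x = y := by
          intro x y z h
          calc x = x + w := (hz x).symm
            _ = x + (z + Classical.choose (hinv z)) := by rw [hneg]
            _ = (x + z) + Classical.choose (hinv z) := (add_assoc ..).symm
            _ = (y + z) + Classical.choose (hinv z) := by rw [h]
            _ = y + (z + Classical.choose (hinv z)) := add_assoc ..
            _ = y + w := by rw [hneg]
            _ = y := hz y
        have hlcan : ∀ a x y : S, a ≠ w → a * x = a * y → x = y := by
          intro a x y hA h
          have h1 : a * (x + Classical.choose (hinv y)) = w := by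
            rw [mul_add, h, ← mul_add, hneg, (hw a).1]
          have h2 : x + Classical.choose (hinv y) = w := by
            by_contra hne
            exact hTT a _ hA hne h1
          exact hacan x y _ (h2.trans (hneg y).symm)
        have hrcan : ∀ a x y : S, a ≠ w → x * a = y * a → x = y := by
          intro a x y hA h
          have h1 : (x + Classical.choose (hinv y)) * a = w := by
            rw [add_mul, h, ← add_mul, hneg, (hw a).2]
          have h2 : x + Classical.choose (hinv y) = w := by
            by_contra hne
            exact hTT _ a hne hA h1
          exact hacan x y _ (h2.trans (hneg y).symm)
        have hsurjL : ∀ a : S, a ≠ w → Function.Surjective (fun x : S => a * x) :=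
          fun a hA => Finite.injective_iff_surjective.mp (fun x y h => hlcan a x y hA h)
        have hsurjR : ∀ a : S, a ≠ w → Function.Surjective (fun x : S => x * a) :=
          fun a hA => Finite.injective_iff_surjective.mp (fun x y h => hrcan a x y hA h)
        obtain ⟨e, he⟩ := hsurjL t0 ht0 t0
        have he : t0 * e = t0 := he
        have hleft : ∀ b : S, e * b = b := fun b =>
          hlcan t0 _ _ ht0 (by rw [← mul_assoc, he])
        obtain ⟨e', he'⟩ := hsurjR t0 ht0 t0
        have he' : e' * t0 = t0 := he'
        have hright' : ∀ b : S, b * e' = b := fun b =>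
          hrcan t0 _ _ ht0 (by rw [mul_assoc, he'])
        have hee : e = e' := (hright' e).symm.trans (hleft e')
        have hright : ∀ b : S, b * e = b := fun b => by rw [hee]; exact hright' b
        have hew : e ≠ w := fun h => ht0 (by rw [← hright t0, h, (hw t0).1])
        have hinvmul : ∀ x : S, x ≠ w → ∃ y, x * y = e := by
          intro x hx
          obtain ⟨y, hy⟩ := hsurjL x hx e
          exact ⟨y, hy⟩
        have hcomm : ∀ x y : S, x * y = y * x := by
          letI : Zero S := ⟨w⟩
          letI : Neg S := ⟨fun x => Classical.choose (hinv x)⟩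
          letI : One S := ⟨e⟩
          letI addgrp : AddCommGroup S :=
            { add := (· + ·)
              add_assoc := PaperSemiring.add_assoc
              zero := w
              zero_add := fun x => (add_comm w x).trans (hz x)
              add_zero := hz
              add_comm := PaperSemiring.add_comm
              neg := fun x => Classical.choose (hinv x)
              neg_add_cancel := fun x => (add_comm _ x).trans (hneg x)
              nsmul := nsmulRec
              zsmul := zsmulRec }
          letI : Ring S :=
            { addgrp with
              mul := (· * ·)
              mul_assoc := PaperSemiring.mul_assoc
              one := e
              one_mul := hleft
              mul_one := hright
              left_distrib := PaperSemiring.left_distrib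
              right_distrib := PaperSemiring.right_distrib
              zero_mul := fun x => (hw x).2
              mul_zero := fun x => (hw x).1 }
          letI : Nontrivial S := ⟨⟨t0, w, ht0⟩⟩
          letI : NoZeroDivisors S :=
            ⟨fun {x y} hxy => by
              by_cases hx : x = w
              · exact Or.inl hx
              · by_cases hy : y = w
                · exact Or.inr hy
                · exact absurd hxy (hTT x y hx hy)⟩
          letI : IsDomain S := NoZeroDivisors.to_isDomain S
          have hisf : IsField S := Finite.isDomain_to_isField S
          exact hisf.mul_comm
        have hfops : FieldOps S :=
          ⟨w, e, fun h => hew h.symm, hz, hinv,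
            fun x => ⟨hright x, hleft x⟩, hcomm, fun x hx => hinvmul x hx⟩
        refine Or.inr (Or.inl ⟨?_, ⟨hfinS, hfops⟩, ?_, ?_, ?_⟩)
        · rintro (h4 | h8)
          · exact aux_idem_not_fieldOps (aux_siso_T4_idem h4) hfops
          · obtain ⟨c, hc⟩ := aux_siso_T8_const h8
            exact aux_const_not_fieldOps hc hfops
        · rintro ⟨hinf, -⟩
          exact @not_finite S hinf hfinS
        · rintro ⟨⟨-, hb⟩, -, -⟩
          exact hbiabs_kill w hb
        · rintro ⟨⟨-, hb⟩, -⟩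
          exact hbiabs_kill w hb
      · -- CASE 3 : infinite simple ring without zero-divisors
        have hsr : SimpleRingNoZeroDiv S := by
          refine ⟨w, hz, hinv, ?_, fun a b ha' hb' => hTT a b ha' hb'⟩
          intro I hI
          have hIdeal : IsIdealSet I := ⟨⟨w, hI.1⟩, hI.2.1, hI.2.2.2⟩
          rcases hsimp _ (aux_alpha_isCong hIdeal) with hid | hfull
          · left
            ext x
            simp only [Set.mem_singleton_iff]
            constructor
            · intro hx
              obtain ⟨u, hu, hux⟩ := hI.2.2.1 x hx
              exact (hid x w).mp ⟨u, hu, w, hI.1, by rw [hux, hww]⟩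
            · rintro rfl
              exact hI.1
          · right
            ext x
            simp only [Set.mem_univ, iff_true]
            obtain ⟨u, hu, v, hv, hxy⟩ := hfull x w
            obtain ⟨u', hu', huu'⟩ := hI.2.2.1 u hu
            have hxv : x + u = v := by rw [hxy, add_comm, hz]
            have hx : x = v + u' := by
              calc x = x + w := (hz x).symm
                _ = x + (u + u') := by rw [huu']
                _ = (x + u) + u' := (add_assoc ..).symm
                _ = v + u' := by rw [hxv]
            rw [hx]
            exact hI.2.1 v hv u' hu'
        refine Or.inr (Or.inr (Or.inl ⟨?_, ?_, ⟨hinfS, hsr⟩, ?_, ?_⟩))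
        · rintro (h4 | h8)
          · exact @not_finite S hinfS (aux_siso_T4_finite h4)
          · exact @not_finite S hinfS (aux_siso_T8_finite h8)
        · rintro ⟨hfin, -⟩
          exact @not_finite S hinfS hfin
        · rintro ⟨⟨-, hb⟩, -, -⟩
          exact hbiabs_kill w hb
        · rintro ⟨⟨-, hb⟩, -⟩
          exact hbiabs_kill w hb
  · -- CASE A : w is bi-absorbing
    have ha : ∀ x : S, x + w = w := fun x => (hfull1 x w).trans hww
    have haw : ∀ x : S, w + x = w := fun x => (add_comm w x).trans (ha x)
    -- T·T ⊆ T
    have hTT : ∀ a b : S, a ≠ w → b ≠ w → a * b ≠ w := by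
      intro a b hA hB hab
      have hba : b * a = w := by
        apply hsq
        rw [mul_assoc, ← mul_assoc a b a, hab, (hw a).2, (hw b).1]
      have hbxa : ∀ x : S, (b * x) * a = w := by
        intro x
        apply hsq
        rw [mul_assoc (b * x) a ((b * x) * a), ← mul_assoc a (b * x) a,
          ← mul_assoc a b x, hab, (hw x).2, (hw a).2, (hw (b * x)).1]
      have hwM : w ∈ {y : S | y * a = w ∧ ∀ x : S, (y * x) * a = w} :=
        ⟨(hw a).2, fun x => by rw [(hw x).2, (hw a).2]⟩
      have hbM : b ∈ {y : S | y * a = w ∧ ∀ x : S, (y * x) * a = w} := ⟨hba, hbxa⟩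
      have hM : IsBiIdealSet {y : S | y * a = w ∧ ∀ x : S, (y * x) * a = w} := by
        refine ⟨⟨w, hwM⟩, ?_, ?_⟩
        · rintro s y ⟨hy1, hy2⟩
          constructor
          · rw [add_mul, hy1, ha]
          · intro x
            rw [add_mul, add_mul, hy2 x, ha]
        · rintro s y ⟨hy1, hy2⟩
          refine ⟨⟨?_, ?_⟩, ?_, ?_⟩
          · rw [mul_assoc, hy1, (hw s).1]
          · intro x
            rw [mul_assoc s y x, mul_assoc s (y * x) a, hy2 x, (hw s).1]
          · exact hy2 s
          · intro x
            rw [mul_assoc y s x]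
            exact hy2 (s * x)
      rcases hsimp _ (aux_beta_isCong hM) with hid | hfull
      · exact hB ((hid b w).mp (Or.inl ⟨hbM, hwM⟩))
      · exact hnil a hA (aux_beta_full_mem hpair hfull a).1
    rcases hsimp _ (aux_gamma2_isCong (S := S)) with hgid | hgfull
    · -- γ₂ = id
      rcases hsimp _ (aux_delta_isCong (S := S)) with hdid | hdfull
      · -- CASE 4 : additively idempotent
        have hidem : ∀ x : S, x + x = x := by
          intro x
          exact ((hdid x (x + x)).mp (aux_delta_double x)).symm
        refine Or.inr (Or.inr (Or.inr (Or.inl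
          ⟨?_, ?_, ?_, ⟨⟨hw, ha⟩, hidem, hTT⟩, ?_⟩)))
        · rintro (h4 | h8)
          · exact aux_siso_T4_no_biabs hw ha h4
          · exact aux_siso_T8_no_idem hidem h8
        · rintro ⟨-, hf⟩
          exact aux_idem_not_fieldOps hidem hf
        · rintro ⟨-, z, hz', hinv', -, -⟩
          have hall := aux_grouplike_all_eq ha z hz' hinv'
          exact hpq ((hall p0).trans (hall q0).symm)
        · rintro ⟨-, -, -, hc2, -⟩
          exact ht0 ((hidem t0).symm.trans (hc2 t0))
      · -- δ full together with γ₂ = id is impossible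
        exfalso
        have hpeel : ∀ i : ℕ, ∀ x : S, nfoldAdd (2 ^ i) x = w → x = w := by
          intro i
          induction i with
          | zero =>
            intro x h
            rw [pow_zero] at h
            exact h
          | succ i ih =>
            intro x h
            have h1 : nfoldAdd (2 ^ (i + 1)) x = nfoldAdd 2 (nfoldAdd (2 ^ i) x) := by
              rw [pow_succ, Nat.mul_comm]
              exact aux_nfoldAdd_comp (by norm_num) Nat.one_le_two_pow x
            rw [h1] at h
            have h2 : gammaRel 2 (nfoldAdd (2 ^ i) x) w := by
              show nfoldAdd 2 _ = nfoldAdd 2 w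
              rw [h]
              exact (aux_nfoldAdd_absorb hww (by norm_num)).symm
            exact ih _ ((hgid _ _).mp h2)
        obtain ⟨i, u, v, h1, h2⟩ := hdfull t0 w
        have h3 : nfoldAdd (2 ^ i) t0 = w := by rw [h1, haw]
        exact ht0 (hpeel i t0 h3)
    · -- γ₂ full : x + x = w for all x
      have hchar2 : ∀ x : S, x + x = w := by
        intro x
        have h1 : x + x = w + w := hgfull x w
        exact h1.trans hww
      have hD : IsBiIdealSet {c : S | ∃ x y : S, x + y = c} := by
        refine ⟨⟨w, w, w, hww⟩, ?_, ?_⟩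
        · rintro s c ⟨x, y, rfl⟩
          exact ⟨s + x, y, add_assoc s x y⟩
        · rintro s c ⟨x, y, rfl⟩
          exact ⟨⟨s * x, s * y, (mul_add ..).symm⟩, ⟨x * s, y * s, (add_mul ..).symm⟩⟩
      rcases hsimp _ (aux_beta_isCong hD) with hDid | hDfull
      · -- S ≅ T8
        have haddc : ∀ x y : S, x + y = w :=
          fun x y => (hDid (x + y) w).mp (Or.inl ⟨⟨x, y, rfl⟩, ⟨w, w, hww⟩⟩)
        have hclass : ∀ x : S, x = w ∨ x = t0 := by
          refine aux_classify hw ht0 hTT ?_ hsimp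
          intro x x' y y' h1 h2
          exact Or.inr ((haddc x y).trans (haddc x' y').symm)
        have ht0t0 : t0 * t0 = t0 := by
          rcases hclass (t0 * t0) with h | h
          · exact absurd h (hTT t0 t0 ht0 ht0)
          · exact h
        have hfw8 : (if w = w then T8.a else T8.b) = T8.a := if_pos rfl
        have hft8 : (if t0 = w then T8.a else T8.b) = T8.b := if_neg ht0
        have hiso : SIso S T8 := by
          refine ⟨⟨fun x => if x = w then T8.a else T8.b,
            fun t => match t with | T8.a => w | T8.b => t0, ?_, ?_⟩, ?_, ?_⟩
          · intro x
            by_cases hx : x = w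
            · simp only [if_pos hx]
              exact hx.symm
            · simp only [if_neg hx]
              rcases hclass x with h | h
              · exact absurd h hx
              · exact h.symm
          · intro t
            cases t
            · show (if w = w then T8.a else T8.b) = T8.a
              exact hfw8
            · show (if t0 = w then T8.a else T8.b) = T8.b
              exact hft8
          · intro x y
            show (if x + y = w then T8.a else T8.b) =
              (if x = w then T8.a else T8.b) + (if y = w then T8.a else T8.b)
            rw [haddc x y, hfw8]
            rfl
          · intro x y
            show (if x * y = w then T8.a else T8.b) =
              (if x = w then T8.a else T8.b) * (if y = w then T8.a else T8.b)
            rcases hclass x with h | h <;> rcases hclass y with h' | h' <;> rw [h, h']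
            · rw [(hw w).1, hfw8]; rfl
            · rw [(hw t0).2, hfw8, hft8]; rfl
            · rw [(hw t0).1, hfw8, hft8]; rfl
            · rw [ht0t0, hft8]; rfl
        have hfinS : Finite S := by
          refine Finite.of_surjective (fun b : Bool => if b then t0 else w) ?_
          intro x
          rcases hclass x with h | h
          exacts [⟨false, h.symm⟩, ⟨true, h.symm⟩]
        refine Or.inl ⟨Or.inr hiso, ?_, ?_, ?_, ?_⟩
        · rintro ⟨-, hf⟩
          exact aux_const_not_fieldOps haddc hf
        · rintro ⟨hinf, -⟩
          exact @not_finite S hinf hfinS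
        · rintro ⟨-, hidem', -⟩
          exact ht0 ((hidem' t0).symm.trans (haddc t0 t0))
        · rintro ⟨-, hinf, -⟩
          exact @not_finite S hinf hfinS
      · -- CASE 5
        have hSS : ∀ c : S, ∃ x y : S, x + y = c :=
          fun c => aux_beta_full_mem hpair hDfull c
        have hpowT : ∀ y : S, y ≠ w → ∀ n : ℕ, 1 ≤ n → nfoldMul n y ≠ w := by
          intro y hy n hn
          induction n, hn using Nat.le_induction with
          | base => exact hy
          | succ n hn ih =>
            rw [aux_nfoldMul_succ hn]
            exact hTT _ _ ih hy
        have hidemMul : ∀ e : S, e ≠ w → e * e = e → False := by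
          intro e he hee
          obtain ⟨u, v, huv⟩ := hSS e
          have hab : (e * u) * e + (e * v) * e = e := by
            calc (e * u) * e + (e * v) * e = (e * u + e * v) * e := (add_mul ..).symm
              _ = (e * (u + v)) * e := by rw [mul_add]
              _ = (e * e) * e := by rw [huv]
              _ = e := by rw [hee, hee]
          have hae : ((e * u) * e) * e = (e * u) * e := by
            rw [mul_assoc (e * u) e e, hee]
          have heb : e * ((e * v) * e) = (e * v) * e := by
            rw [← mul_assoc e (e * v) e, ← mul_assoc e e v, hee]
          have h1 : ((e * u) * e) * ((e * u) * e) + ((e * u) * e) * ((e * v) * e) =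
              (e * u) * e := by
            rw [← mul_add, hab, hae]
          have h2 : ((e * u) * e) * ((e * v) * e) + ((e * v) * e) * ((e * v) * e) =
              (e * v) * e := by
            rw [← add_mul, hab, heb]
          refine he ?_
          calc e = (e * u) * e + (e * v) * e := hab.symm
            _ = (((e * u) * e) * ((e * u) * e) + ((e * u) * e) * ((e * v) * e)) +
                (((e * u) * e) * ((e * v) * e) + ((e * v) * e) * ((e * v) * e)) := by
                rw [h1, h2]
            _ = ((e * u) * e) * ((e * u) * e) +
                ((((e * u) * e) * ((e * v) * e) + ((e * u) * e) * ((e * v) * e)) +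
                  ((e * v) * e) * ((e * v) * e)) := by
                rw [add_assoc, ← add_assoc (((e * u) * e) * ((e * v) * e))
                  (((e * u) * e) * ((e * v) * e)) (((e * v) * e) * ((e * v) * e))]
            _ = ((e * u) * e) * ((e * u) * e) + (w + ((e * v) * e) * ((e * v) * e)) := by
                rw [hchar2]
            _ = ((e * u) * e) * ((e * u) * e) + w := by rw [haw]
            _ = w := ha _
        have hdistinct : ∀ y : S, y ≠ w → ∀ m n : ℕ, 1 ≤ m → 1 ≤ n → m ≠ n →
            nfoldMul m y ≠ nfoldMul n y := by
          have haux : ∀ y : S, y ≠ w → ∀ m n : ℕ, 1 ≤ m → m < n →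
              nfoldMul m y = nfoldMul n y → False := by
            intro y hy m n hm hlt heq
            have hd1 : 1 ≤ n - m := by omega
            have hstep : ∀ p : ℕ, m ≤ p → nfoldMul p y = nfoldMul (p + (n - m)) y := by
              intro p hp
              induction p, hp using Nat.le_induction with
              | base =>
                rw [show m + (n - m) = n by omega]
                exact heq
              | succ p hp ih =>
                have hp1 : 1 ≤ p := by omega
                rw [show (p + 1) + (n - m) = (p + (n - m)) + 1 by omega,
                  aux_nfoldMul_succ (show 1 ≤ p + (n - m) by omega),
                  aux_nfoldMul_succ hp1, ih]
            have hstepk : ∀ k p : ℕ, m ≤ p → nfoldMul p y = nfoldMul (p + k * (n - m)) y := by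
              intro k
              induction k with
              | zero =>
                intro p hp
                rw [Nat.zero_mul, Nat.add_zero]
              | succ k ih =>
                intro p hp
                rw [ih p hp, show p + (k + 1) * (n - m) = (p + k * (n - m)) + (n - m) by ring]
                exact hstep (p + k * (n - m)) (by omega)
            have hN1 : 1 ≤ (m + 1) * (n - m) := by
              have := Nat.mul_le_mul (show 1 ≤ m + 1 by omega) hd1
              omega
            have hNm : m ≤ (m + 1) * (n - m) := by
              calc m ≤ (m + 1) * 1 := by omega
                _ ≤ (m + 1) * (n - m) := Nat.mul_le_mul_left _ hd1
            have hee : nfoldMul ((m + 1) * (n - m)) y * nfoldMul ((m + 1) * (n - m)) y =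
                nfoldMul ((m + 1) * (n - m)) y := by
              rw [← aux_nfoldMul_add hN1 hN1]
              exact (hstepk (m + 1) ((m + 1) * (n - m)) hNm).symm
            exact hidemMul _ (hpowT y hy _ hN1) hee
          intro y hy m n hm hn hmn heq
          rcases Nat.lt_or_ge m n with h | h
          · exact haux y hy m n hm h heq
          · exact haux y hy n m hn (by omega) heq.symm
        have hinfS : Infinite S := by
          refine Infinite.of_injective (fun n : ℕ => nfoldMul (n + 1) t0) ?_
          intro m n h
          by_contra hne
          exact hdistinct t0 ht0 (m + 1) (n + 1) (by omega) (by omega) (by omega) h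
        refine Or.inr (Or.inr (Or.inr (Or.inr ⟨?_, ?_, ?_, ?_,
          ⟨⟨hw, ha⟩, hinfS, hSS, hchar2, hTT, hdistinct⟩⟩)))
        · rintro (h4 | h8)
          · exact @not_finite S hinfS (aux_siso_T4_finite h4)
          · exact @not_finite S hinfS (aux_siso_T8_finite h8)
        · rintro ⟨hfin, -⟩
          exact @not_finite S hinfS hfin
        · rintro ⟨-, z, hz', hinv', -, -⟩
          have hall := aux_grouplike_all_eq ha z hz' hinv'
          exact hpq ((hall p0).trans (hall q0).symm)
        · rintro ⟨-, hidem', -⟩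
          exact ht0 ((hidem' t0).symm.trans (hchar2 t0))
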